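/- The regular spanners are closed under set difference: for all regular spanners P1 and P2, the spanner P1 − P2 defined by (P1 − P2)(d) = P1(d) \ P2(d) for every document d is a regular spanner. -/

import Mathlib

namespace DocSpanners

/-- A span: a pair of endpoint positions `[i, j⟩`. -/
abbrev Span : Type := ℕ × ℕ

/-- `s` is a span of document `d`. -/
def IsSpanOf {α : Type} (d : List α) (s : Span) : Prop :=
  s.1 ≤ s.2 ∧ s.2 ≤ d.length

/-- A (schemaless) mapping over variable type `V`: a partial assignment of spans. -/
abbrev Mapping (V : Type) : Type := V → Option Span

/-- `m` is a mapping of document `d`. -/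
def MappingOf {α V : Type} (d : List α) (m : Mapping V) : Prop :=
  ∀ x s, m x = some s → IsSpanOf d s

/-- A spanner: maps documents to sets of mappings. -/
abbrev Spanner (α V : Type) : Type := List α → Set (Mapping V)

/-- Labels of a variable-set automaton: letters and variable markers. -/
inductive Label (α V : Type) : Type where
  | letter (a : α)
  | vopen (x : V)
  | vclose (x : V)
deriving DecidableEq

/-- The sequence of letters of a ref-word. -/
def letters {α V : Type} (w : List (Label α V)) : List α :=
  w.filterMap fun l => match l with
    | Label.letter a => some a
    | _ => none

/-- A ref-word is valid if for each variable, either its markers do not appear, or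
the opening and closing markers appear exactly once with the opening first. -/
def ValidRef {α V : Type} [DecidableEq α] [DecidableEq V] (w : List (Label α V)) : Prop :=
  ∀ x : V,
    (Label.vopen x ∉ w ∧ Label.vclose x ∉ w) ∨
    (w.count (Label.vopen x) = 1 ∧ w.count (Label.vclose x) = 1 ∧
      w.idxOf (Label.vopen x) < w.idxOf (Label.vclose x))

/-- The mapping defined by a (valid) ref-word: each marked variable is sent to the
span delimited by the positions at which its markers are read. -/
def refMapping {α V : Type} [DecidableEq α] [DecidableEq V] (w : List (Label α V)) :
    Mapping V := fun x =>
  if Label.vopen x ∈ w then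
    some ((letters (w.take (w.idxOf (Label.vopen x)))).length,
          (letters (w.take (w.idxOf (Label.vclose x)))).length)
  else none

/-- A variable-set automaton with state type `Q`. -/
structure VA (α V Q : Type) : Type where
  init : Q
  final : Set Q
  trans : Q → Label α V → Q → Prop

/-- Paths in a VA. -/
inductive VA.Path {α V Q : Type} (A : VA α V Q) : Q → List (Label α V) → Q → Prop where
  | nil (q : Q) : VA.Path A q [] q
  | cons {q q' q'' : Q} {l : Label α V} {w : List (Label α V)} :
      A.trans q l q' → VA.Path A q' w q'' → VA.Path A q (l :: w) q''

/-- The VA accepts the ref-word `w` (an accepting run reads `w`). -/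
def VA.AcceptsRef {α V Q : Type} (A : VA α V Q) (w : List (Label α V)) : Prop :=
  ∃ qf ∈ A.final, A.Path A.init w qf

/-- A VA is sequential if every accepting run is valid. -/
def VA.Sequential {α V Q : Type} [DecidableEq α] [DecidableEq V] (A : VA α V Q) : Prop :=
  ∀ w, A.AcceptsRef w → ValidRef w

/-- The spanner defined by a (sequential) VA. -/
def VA.spanner {α V Q : Type} [DecidableEq α] [DecidableEq V] (A : VA α V Q) :
    Spanner α V := fun d =>
  {m | ∃ w, A.AcceptsRef w ∧ letters w = d ∧ refMapping w = m}

/-- A spanner is regular if it is defined by some sequential VA with finitely many states. -/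
def IsRegular {α V : Type} [DecidableEq α] [DecidableEq V] (P : Spanner α V) : Prop :=
  ∃ (Q : Type) (_ : Fintype Q) (A : VA α V Q), A.Sequential ∧ A.spanner = P

/-- The skyline operator: keep only the mappings of `P d` that are maximal under `R d`. -/
def skyline {α V : Type} (P : Spanner α V)
    (R : List α → Mapping V → Mapping V → Prop) : Spanner α V := fun d =>
  {m | m ∈ P d ∧ ∀ m' ∈ P d, m' ≠ m → ¬ R d m m'}

/-- The variable inclusion domination relation: `m2` extends `m1`. -/
def varIncRel {V : Type} (m1 m2 : Mapping V) : Prop :=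
  ∀ x s, m1 x = some s → m2 x = some s

/-- Two mappings have the same domain. -/
def sameDom {V : Type} (m1 m2 : Mapping V) : Prop :=
  ∀ x, m1 x = none ↔ m2 x = none

/-- The span inclusion domination relation. -/
def spanIncRel {V : Type} (m1 m2 : Mapping V) : Prop :=
  sameDom m1 m2 ∧
    ∀ x s1 s2, m1 x = some s1 → m2 x = some s2 → s2.1 ≤ s1.1 ∧ s1.2 ≤ s2.2

/-- The left-to-right domination relation: same start, `m2` no shorter. -/
def ltrRel {V : Type} (m1 m2 : Mapping V) : Prop :=
  sameDom m1 m2 ∧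
    ∀ x s1 s2, m1 x = some s1 → m2 x = some s2 →
      s1.1 = s2.1 ∧ s1.2 - s1.1 ≤ s2.2 - s2.1

/-- The span length domination relation: `m2`'s spans are no shorter. -/
def spanLenRel {V : Type} (m1 m2 : Mapping V) : Prop :=
  sameDom m1 m2 ∧
    ∀ x s1 s2, m1 x = some s1 → m2 x = some s2 → s1.2 - s1.1 ≤ s2.2 - s2.1


set_option linter.unusedSectionVars false

section Comb
variable {α V : Type} [DecidableEq α] [DecidableEq V]

@[simp] lemma letters_nil : letters ([] : List (Label α V)) = [] := rfl
@[simp] lemma letters_cons_letter (a : α) (w : List (Label α V)) :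
    letters (Label.letter a :: w) = a :: letters w := rfl
@[simp] lemma letters_cons_vopen (x : V) (w : List (Label α V)) :
    letters (Label.vopen x :: w) = letters w := rfl
@[simp] lemma letters_cons_vclose (x : V) (w : List (Label α V)) :
    letters (Label.vclose x :: w) = letters w := rfl
@[simp] lemma letters_append (u v : List (Label α V)) :
    letters (u ++ v) = letters u ++ letters v := List.filterMap_append ..

/-- block decomposition: (first block, list of blocks after each letter) -/
def dec : List (Label α V) → Multiset (Label α V) × List (Multiset (Label α V))
  | [] => (0, [])
  | Label.letter _ :: w => (0, (dec w).1 :: (dec w).2)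
  | Label.vopen x :: w => (Label.vopen x ::ₘ (dec w).1, (dec w).2)
  | Label.vclose x :: w => (Label.vclose x ::ₘ (dec w).1, (dec w).2)

/-- the blocks as a single list -/
def blocks (w : List (Label α V)) : List (Multiset (Label α V)) := (dec w).1 :: (dec w).2

/-- the number of letters strictly before position k -/
def lb (w : List (Label α V)) (k : ℕ) : ℕ := (letters (w.take k)).length

@[simp] lemma lb_zero (w : List (Label α V)) : lb w 0 = 0 := rfl
@[simp] lemma lb_letter (a : α) (w : List (Label α V)) (k : ℕ) :
    lb (Label.letter a :: w) (k+1) = lb w k + 1 := by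
  simp [lb, List.take_succ_cons]
@[simp] lemma lb_vopen (x : V) (w : List (Label α V)) (k : ℕ) :
    lb (Label.vopen x :: w) (k+1) = lb w k := by
  simp [lb, List.take_succ_cons]
@[simp] lemma lb_vclose (x : V) (w : List (Label α V)) (k : ℕ) :
    lb (Label.vclose x :: w) (k+1) = lb w k := by
  simp [lb, List.take_succ_cons]

lemma dec_len (w : List (Label α V)) : (dec w).2.length = (letters w).length := by
  induction w with
  | nil => rfl
  | cons l w ih => cases l <;> simp [dec, ih]

lemma lb_le (w : List (Label α V)) (k : ℕ) : lb w k ≤ (letters w).length := by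
  have h : letters (w.take k ++ w.drop k) = letters (w.take k) ++ letters (w.drop k) :=
    letters_append ..
  rw [List.take_append_drop] at h
  rw [lb, h, List.length_append]
  omega

/-- membership in a block implies membership in the word -/
lemma mem_of_mem_blocks {l : Label α V} {w : List (Label α V)} {i : ℕ}
    (h : l ∈ (blocks w).getD i 0) : l ∈ w := by
  induction w generalizing i with
  | nil =>
    rcases i with _ | i <;> simp_all [blocks, dec]
  | cons l' w ih =>
    cases l' with
    | letter a =>
      rcases i with _ | i
      · simp [blocks, dec] at h
      · exact List.mem_cons_of_mem _ (ih (i := i) (by simpa [blocks, dec] using h))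
    | vopen x =>
      rcases i with _ | i
      · simp only [blocks, dec, List.getD_cons_zero, Multiset.mem_cons] at h
        rcases h with h | h
        · simp [h]
        · exact List.mem_cons_of_mem _ (ih (i := 0) (by simpa [blocks]))
      · exact List.mem_cons_of_mem _ (ih (i := i+1) (by simpa [blocks, dec] using h))
    | vclose x =>
      rcases i with _ | i
      · simp only [blocks, dec, List.getD_cons_zero, Multiset.mem_cons] at h
        rcases h with h | h
        · simp [h]
        · exact List.mem_cons_of_mem _ (ih (i := 0) (by simpa [blocks]))
      · exact List.mem_cons_of_mem _ (ih (i := i+1) (by simpa [blocks, dec] using h))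

/-- letters do not occur in blocks -/
lemma count_letter_blocks (a : α) (w : List (Label α V)) (i : ℕ) :
    Multiset.count (Label.letter a) ((blocks w).getD i 0) = 0 := by
  rw [Multiset.count_eq_zero]
  intro h
  induction w generalizing i with
  | nil => rcases i with _ | i <;> simp_all [blocks, dec]
  | cons l' w ih =>
    cases l' with
    | letter b =>
      rcases i with _ | i
      · simp [blocks, dec] at h
      · exact ih (i := i) (by simpa [blocks, dec] using h)
    | vopen x =>
      rcases i with _ | i
      · simp only [blocks, dec, List.getD_cons_zero, Multiset.mem_cons] at h
        rcases h with h | h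
        · exact nomatch h
        · exact ih (i := 0) (by simpa [blocks])
      · exact ih (i := i+1) (by simpa [blocks, dec] using h)
    | vclose x =>
      rcases i with _ | i
      · simp only [blocks, dec, List.getD_cons_zero, Multiset.mem_cons] at h
        rcases h with h | h
        · exact nomatch h
        · exact ih (i := 0) (by simpa [blocks])
      · exact ih (i := i+1) (by simpa [blocks, dec] using h)

/-- non-members have count zero in every block -/
lemma count_blocks_of_not_mem {l : Label α V} {w : List (Label α V)} (hl : l ∉ w) (i : ℕ) :
    Multiset.count l ((blocks w).getD i 0) = 0 := by
  rw [Multiset.count_eq_zero]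
  exact fun h => hl (mem_of_mem_blocks h)



lemma refMapping_eq {α V : Type} [DecidableEq α] [DecidableEq V] (w : List (Label α V)) (x : V) :
    refMapping w x = if Label.vopen x ∈ w then
      some (lb w (w.idxOf (Label.vopen x)), lb w (w.idxOf (Label.vclose x)))
    else none := rfl

/-- the central counting lemma: a marker occurring exactly once occurs exactly in the
block corresponding to the number of letters before it -/
lemma count_blocks_of_count_one {l : Label α V} (hm : ∀ a : α, l ≠ Label.letter a)
    {w : List (Label α V)} (hc : w.count l = 1) (i : ℕ) :
    Multiset.count l ((blocks w).getD i 0) = if i = lb w (w.idxOf l) then 1 else 0 := by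
  induction w generalizing i with
  | nil => simp at hc
  | cons l' w ih =>
    by_cases he : l = l'
    · subst he
      have hcw : w.count l = 0 := by
        have := (List.count_cons_self (a := l) (l := w))
        omega
      have hnm : l ∉ w := List.count_eq_zero.mp hcw
      have hidx : (l :: w).idxOf l = 0 := List.idxOf_cons_self
      rw [hidx, lb_zero]
      cases l with
      | letter a => exact absurd rfl (hm a)
      | vopen x =>
        rcases i with _ | i
        · have h0 : Multiset.count (Label.vopen x) ((blocks w).getD 0 0) = 0 :=
            count_blocks_of_not_mem hnm 0
          simp only [blocks, List.getD_cons_zero] at h0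
          simp [blocks, dec, h0]
        · have h0 : Multiset.count (Label.vopen x) ((blocks w).getD (i+1) 0) = 0 :=
            count_blocks_of_not_mem hnm (i+1)
          simp only [blocks, List.getD_cons_succ] at h0
          simpa [blocks, dec] using h0
      | vclose x =>
        rcases i with _ | i
        · have h0 : Multiset.count (Label.vclose x) ((blocks w).getD 0 0) = 0 :=
            count_blocks_of_not_mem hnm 0
          simp only [blocks, List.getD_cons_zero] at h0
          simp [blocks, dec, h0]
        · have h0 : Multiset.count (Label.vclose x) ((blocks w).getD (i+1) 0) = 0 :=
            count_blocks_of_not_mem hnm (i+1)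
          simp only [blocks, List.getD_cons_succ] at h0
          simpa [blocks, dec] using h0
    · have hcw : w.count l = 1 := by
        rw [List.count_cons_of_ne (Ne.symm he)] at hc; exact hc
      have hidx : (l' :: w).idxOf l = w.idxOf l + 1 :=
        List.idxOf_cons_ne w (fun h => he h.symm)
      rw [hidx]
      cases l' with
      | letter a =>
        rcases i with _ | i
        · have : Multiset.count l ((0:Multiset (Label α V))) = 0 := by simp
          simp only [blocks, dec, List.getD_cons_zero, lb_letter]
          simp
        · simp only [blocks, dec, List.getD_cons_succ, lb_letter]
          have := ih hcw i
          simp only [blocks] at this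
          rw [this]
          by_cases h : i = lb w (w.idxOf l) <;> simp [h]
      | vopen x =>
        have hne : l ≠ Label.vopen x := he
        rcases i with _ | i
        · simp only [blocks, dec, List.getD_cons_zero, lb_vopen,
            Multiset.count_cons_of_ne hne]
          have := ih hcw 0
          simpa only [blocks, List.getD_cons_zero] using this
        · simp only [blocks, dec, List.getD_cons_succ, lb_vopen]
          have := ih hcw (i+1)
          simpa only [blocks, List.getD_cons_succ] using this
      | vclose x =>
        have hne : l ≠ Label.vclose x := he
        rcases i with _ | i
        · simp only [blocks, dec, List.getD_cons_zero, lb_vclose,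
            Multiset.count_cons_of_ne hne]
          have := ih hcw 0
          simpa only [blocks, List.getD_cons_zero] using this
        · simp only [blocks, dec, List.getD_cons_succ, lb_vclose]
          have := ih hcw (i+1)
          simpa only [blocks, List.getD_cons_succ] using this

lemma mem_of_count_one {l : Label α V} {w : List (Label α V)} (h : w.count l = 1) : l ∈ w := by
  by_contra hn
  rw [List.count_eq_zero.mpr hn] at h
  exact absurd h.symm one_ne_zero

lemma valid_counts {w : List (Label α V)} (hw : ValidRef w) {x : V}
    (hx : Label.vopen x ∈ w) :
    w.count (Label.vopen x) = 1 ∧ w.count (Label.vclose x) = 1 := by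
  rcases hw x with ⟨h1, _⟩ | ⟨h1, h2, _⟩
  · exact absurd hx h1
  · exact ⟨h1, h2⟩

lemma not_mem_vclose {w : List (Label α V)} (hw : ValidRef w) {x : V}
    (hx : Label.vopen x ∉ w) : Label.vclose x ∉ w := by
  rcases hw x with ⟨_, h2⟩ | ⟨h1, _, _⟩
  · exact h2
  · exact absurd (mem_of_count_one h1) hx

lemma mem_iff_of_map {u v : List (Label α V)}
    (hm : refMapping (α := α) u = refMapping v) (x : V) :
    Label.vopen x ∈ u ↔ Label.vopen x ∈ v := by
  have h := congrFun hm x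
  rw [refMapping_eq, refMapping_eq] at h
  constructor <;> intro hx
  · by_contra hxv
    rw [if_pos hx, if_neg hxv] at h
    exact nomatch h
  · by_contra hxu
    rw [if_neg hxu, if_pos hx] at h
    exact nomatch h

lemma idx_eq_of_map {u v : List (Label α V)}
    (hm : refMapping (α := α) u = refMapping v) {x : V}
    (hxu : Label.vopen x ∈ u) (hxv : Label.vopen x ∈ v) :
    lb u (u.idxOf (Label.vopen x)) = lb v (v.idxOf (Label.vopen x)) ∧
    lb u (u.idxOf (Label.vclose x)) = lb v (v.idxOf (Label.vclose x)) := by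
  have h := congrFun hm x
  rw [refMapping_eq, refMapping_eq, if_pos hxu, if_pos hxv] at h
  have h' := Option.some.inj h
  exact ⟨congrArg Prod.fst h', congrArg Prod.snd h'⟩

lemma blocks_eq_of_map {u v : List (Label α V)} (hu : ValidRef u) (hv : ValidRef v)
    (hm : refMapping u = refMapping v) :
    ∀ i, (blocks u).getD i 0 = (blocks v).getD i 0 := by
  intro i
  ext l
  cases l with
  | letter a => rw [count_letter_blocks, count_letter_blocks]
  | vopen x =>
    by_cases hx : Label.vopen x ∈ u
    · have hxv : Label.vopen x ∈ v := (mem_iff_of_map hm x).mp hx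
      have cu := (valid_counts hu hx).1
      have cv := (valid_counts hv hxv).1
      rw [count_blocks_of_count_one (fun a h => by cases h) cu i,
        count_blocks_of_count_one (fun a h => by cases h) cv i,
        (idx_eq_of_map hm hx hxv).1]
    · have hxv : Label.vopen x ∉ v := fun h => hx ((mem_iff_of_map hm x).mpr h)
      rw [count_blocks_of_not_mem hx, count_blocks_of_not_mem hxv]
  | vclose x =>
    by_cases hx : Label.vopen x ∈ u
    · have hxv : Label.vopen x ∈ v := (mem_iff_of_map hm x).mp hx
      have cu := (valid_counts hu hx).2
      have cv := (valid_counts hv hxv).2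
      rw [count_blocks_of_count_one (fun a h => by cases h) cu i,
        count_blocks_of_count_one (fun a h => by cases h) cv i,
        (idx_eq_of_map hm hx hxv).2]
    · have hxv : Label.vopen x ∉ v := fun h => hx ((mem_iff_of_map hm x).mpr h)
      rw [count_blocks_of_not_mem (not_mem_vclose hu hx),
        count_blocks_of_not_mem (not_mem_vclose hv hxv)]

/-- Lemma B: valid ref-words with the same letters and mapping have the same decomposition. -/
lemma dec_eq_of_map {u v : List (Label α V)} (hu : ValidRef u) (hv : ValidRef v)
    (hl : letters u = letters v) (hm : refMapping u = refMapping v) :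
    dec u = dec v := by
  have hb : blocks u = blocks v := by
    apply List.ext_getElem
    · simp [blocks, dec_len, hl]
    · intro i h1 h2
      have h := blocks_eq_of_map hu hv hm i
      rwa [List.getD_eq_getElem _ _ h1, List.getD_eq_getElem _ _ h2] at h
  simp only [blocks, List.cons.injEq] at hb
  rw [Prod.ext_iff]
  exact hb

lemma mem_of_dec {u v : List (Label α V)} (hd : dec u = dec v) {l : Label α V}
    (hml : ∀ a : α, l ≠ Label.letter a) (hc : u.count l = 1) : l ∈ v := by
  have h := count_blocks_of_count_one hml hc (lb u (u.idxOf l))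
  rw [if_pos rfl] at h
  apply mem_of_mem_blocks (w := v) (i := lb u (u.idxOf l))
  have hbe : blocks u = blocks v := by unfold blocks; rw [hd]
  rw [← hbe]
  exact Multiset.count_pos.mp (by rw [h]; exact Nat.one_pos)

lemma idx_eq_of_dec {u v : List (Label α V)} (hd : dec u = dec v) {l : Label α V}
    (hml : ∀ a : α, l ≠ Label.letter a) (hcu : u.count l = 1) (hcv : v.count l = 1) :
    lb u (u.idxOf l) = lb v (v.idxOf l) := by
  have h1 := count_blocks_of_count_one hml hcu (lb u (u.idxOf l))
  have h2 := count_blocks_of_count_one hml hcv (lb u (u.idxOf l))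
  rw [if_pos rfl] at h1
  have hbe : blocks u = blocks v := by unfold blocks; rw [hd]
  rw [← hbe, h1] at h2
  by_contra hne
  rw [if_neg hne] at h2
  exact one_ne_zero h2

/-- Lemma A: valid ref-words with the same decomposition have the same mapping. -/
lemma map_eq_of_dec {u v : List (Label α V)} (hu : ValidRef u) (hv : ValidRef v)
    (hd : dec u = dec v) : refMapping u = refMapping v := by
  funext x
  by_cases hx : Label.vopen x ∈ u
  · have cu := valid_counts hu hx
    have hxv : Label.vopen x ∈ v :=
      mem_of_dec hd (fun a h => nomatch h) cu.1
    have cv := valid_counts hv hxv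
    rw [refMapping_eq, refMapping_eq, if_pos hx, if_pos hxv,
      idx_eq_of_dec hd (fun a h => by cases h) cu.1 cv.1,
      idx_eq_of_dec hd (fun a h => by cases h) cu.2 cv.2]
  · have hxv : Label.vopen x ∉ v := by
      intro h
      exact hx (mem_of_dec hd.symm (fun a h' => nomatch h') (valid_counts hv h).1)
    rw [refMapping_eq, refMapping_eq, if_neg hx, if_neg hxv]

lemma dec_of_letters_nil {v : List (Label α V)} (h : letters v = []) :
    dec v = ((v : Multiset (Label α V)), []) := by
  induction v with
  | nil => simp [dec]
  | cons l v ih =>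
    cases l with
    | letter a => simp at h
    | vopen x =>
      rw [letters_cons_vopen] at h
      simp [dec, ih h]
    | vclose x =>
      rw [letters_cons_vclose] at h
      simp [dec, ih h]

lemma dec_append_of_letters_nil {p : List (Label α V)} (h : letters p = []) (u : List (Label α V)) :
    dec (p ++ u) = ((p : Multiset (Label α V)) + (dec u).1, (dec u).2) := by
  induction p with
  | nil => simp
  | cons l p ih =>
    cases l with
    | letter a => simp at h
    | vopen x =>
      rw [letters_cons_vopen] at h
      show dec (Label.vopen x :: (p ++ u)) = _
      rw [dec, ih h]
      rw [← Multiset.cons_coe, Multiset.cons_add]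
    | vclose x =>
      rw [letters_cons_vclose] at h
      show dec (Label.vclose x :: (p ++ u)) = _
      rw [dec, ih h]
      rw [← Multiset.cons_coe, Multiset.cons_add]

lemma exists_split {v : List (Label α V)} {a : α} {L : List α} (h : letters v = a :: L) :
    ∃ p v', v = p ++ Label.letter a :: v' ∧ letters p = [] ∧ letters v' = L := by
  induction v with
  | nil => simp at h
  | cons l v ih =>
    cases l with
    | letter b =>
      rw [letters_cons_letter] at h
      obtain ⟨rfl, rfl⟩ := List.cons.inj h
      exact ⟨[], v, rfl, rfl, rfl⟩
    | vopen x =>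
      rw [letters_cons_vopen] at h
      obtain ⟨p, v', rfl, hp, hv'⟩ := ih h
      exact ⟨Label.vopen x :: p, v', rfl, by simpa using hp, hv'⟩
    | vclose x =>
      rw [letters_cons_vclose] at h
      obtain ⟨p, v', rfl, hp, hv'⟩ := ih h
      exact ⟨Label.vclose x :: p, v', rfl, by simpa using hp, hv'⟩

end Comb

section Auto
variable {α V Q : Type}

lemma path_nil_eq {A : VA α V Q} {q q' : Q} (h : A.Path q [] q') : q = q' := by
  cases h; rfl

lemma path_trans {A : VA α V Q} {q q' q'' : Q} {u v : List (Label α V)}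
    (h1 : A.Path q u q') (h2 : A.Path q' v q'') : A.Path q (u ++ v) q'' := by
  induction h1 with
  | nil => exact h2
  | cons t _ ih => exact VA.Path.cons t (ih h2)

lemma path_append_split {A : VA α V Q} {q q'' : Q} {u v : List (Label α V)}
    (h : A.Path q (u ++ v) q'') : ∃ q', A.Path q u q' ∧ A.Path q' v q'' := by
  induction u generalizing q with
  | nil => exact ⟨q, VA.Path.nil q, h⟩
  | cons l u ih =>
    cases h with
    | cons t p =>
      obtain ⟨q', p1, p2⟩ := ih p
      exact ⟨q', VA.Path.cons t p1, p2⟩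

lemma path_mem_split {A : VA α V Q} {q q' : Q} {l : Label α V} {w : List (Label α V)}
    (h : A.Path q w q') (hm : l ∈ w) :
    ∃ u v q1 q2, w = u ++ l :: v ∧ A.Path q u q1 ∧ A.trans q1 l q2 ∧ A.Path q2 v q' := by
  induction h with
  | nil => simp at hm
  | cons t p ih =>
    rename_i qa qb qc l' w'
    by_cases he : l' = l
    · subst he
      exact ⟨[], w', qa, qb, rfl, VA.Path.nil qa, t, p⟩
    · have hm' : l ∈ w' := by
        rcases List.mem_cons.mp hm with h | h
        · exact absurd h.symm he
        · exact h
      obtain ⟨u, v, q1, q2, rfl, p1, t2, p2⟩ := ih hm'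
      exact ⟨l' :: u, v, q1, q2, rfl, VA.Path.cons t p1, t2, p2⟩

variable [DecidableEq α] [DecidableEq V]

/-- a sequential VA with finitely many states uses only finitely many variables -/
lemma openVars_finite (A : VA α V Q) [Finite Q] (hseq : A.Sequential) :
    {x : V | ∃ w, A.AcceptsRef w ∧ Label.vopen x ∈ w}.Finite := by
  rw [← Set.finite_coe_iff]
  set OV := {x : V | ∃ w, A.AcceptsRef w ∧ Label.vopen x ∈ w} with hOV
  have hP : ∀ x : OV, ∃ p : Q × Q, A.trans p.1 (Label.vopen x.1) p.2 ∧
      ∃ u v qf, qf ∈ A.final ∧ A.Path A.init u p.1 ∧ A.Path p.2 v qf := by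
    rintro ⟨x, w, ⟨qf, hqf, hpath⟩, hx⟩
    obtain ⟨u, v, q1, q2, rfl, p1, t, p2⟩ := path_mem_split hpath hx
    exact ⟨(q1, q2), t, u, v, qf, hqf, p1, p2⟩
  choose f hf1 hf2 using hP
  apply Finite.of_injective f
  intro x y hxy
  by_contra hne
  have hne' : x.1 ≠ y.1 := fun h => hne (Subtype.ext h)
  obtain ⟨u, v, qf, hqf, p1, p2⟩ := hf2 x
  have ty : A.trans (f x).1 (Label.vopen y.1) (f x).2 := by rw [hxy]; exact hf1 y
  have tx : A.trans (f x).1 (Label.vopen x.1) (f x).2 := hf1 x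
  -- the original word and the swapped word are both accepted
  have haccx : A.AcceptsRef (u ++ Label.vopen x.1 :: v) :=
    ⟨qf, hqf, path_trans p1 (VA.Path.cons tx p2)⟩
  have haccy : A.AcceptsRef (u ++ Label.vopen y.1 :: v) :=
    ⟨qf, hqf, path_trans p1 (VA.Path.cons ty p2)⟩
  have hvx := hseq _ haccx
  have hvy := hseq _ haccy
  -- counts in the original word
  have hmemx : Label.vopen x.1 ∈ u ++ Label.vopen x.1 :: v := by simp
  obtain ⟨c1, c2⟩ := valid_counts hvx hmemx
  have hcu : u.count (Label.vopen x.1) = 0 ∧ v.count (Label.vopen x.1) = 0 := by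
    rw [List.count_append, List.count_cons_self] at c1
    omega
  -- in the swapped word, vopen x does not occur but vclose x does
  have hno : Label.vopen x.1 ∉ u ++ Label.vopen y.1 :: v := by
    rw [← List.count_eq_zero, List.count_append,
      List.count_cons_of_ne (by simpa using Ne.symm hne'), hcu.1, hcu.2]
  have hyes : Label.vclose x.1 ∈ u ++ Label.vopen y.1 :: v := by
    have : (u ++ Label.vopen x.1 :: v).count (Label.vclose x.1) = 1 := c2
    rw [List.count_append, List.count_cons_of_ne (by simp)] at this
    apply mem_of_count_one (l := Label.vclose x.1)
    rw [List.count_append, List.count_cons_of_ne (by simp)]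
    exact this
  rcases hvy x.1 with ⟨_, h2⟩ | ⟨h1, _, _⟩
  · exact h2 hyes
  · exact hno (mem_of_count_one h1)

end Auto

section D
variable {α V Q2 : Type} [DecidableEq α] [DecidableEq V]

/-- marker multiset of a ref-word -/
def mks (w : List (Label α V)) : Multiset (Label α V) :=
  ↑(w.filter fun l => match l with | Label.letter _ => false | _ => true)

@[simp] lemma mks_nil : mks ([] : List (Label α V)) = 0 := rfl
@[simp] lemma mks_letter (a : α) (w : List (Label α V)) :
    mks (Label.letter a :: w) = mks w := rfl
@[simp] lemma mks_vopen (x : V) (w : List (Label α V)) :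
    mks (Label.vopen x :: w) = Label.vopen x ::ₘ mks w := rfl
@[simp] lemma mks_vclose (x : V) (w : List (Label α V)) :
    mks (Label.vclose x :: w) = Label.vclose x ::ₘ mks w := rfl

variable (W2 : Finset V)

/-- encoded markers over the finite variable set -/
def toLabel (α : Type) (m : {x // x ∈ W2} × Bool) : Label α V :=
  if m.2 then Label.vopen m.1.1 else Label.vclose m.1.1

lemma toLabel_ne_letter (m : {x // x ∈ W2} × Bool) (a : α) : toLabel W2 α m ≠ Label.letter a := by
  unfold toLabel; split <;> simp

/-- the multiset of markers of a buffer -/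
noncomputable def blockMs (α : Type) (B : Set ({x // x ∈ W2} × Bool)) : Multiset (Label α V) :=
  (Set.toFinite B).toFinset.val.map (toLabel W2 α)

@[simp] lemma blockMs_empty : blockMs W2 α (∅ : Set ({x // x ∈ W2} × Bool)) = 0 := by
  unfold blockMs
  rw [Set.Finite.toFinset_eq_empty.mpr rfl]
  rfl

lemma mem_blockMs {l : Label α V} {B : Set ({x // x ∈ W2} × Bool)} :
    l ∈ blockMs W2 α B ↔ ∃ m ∈ B, toLabel W2 α m = l := by
  unfold blockMs
  simp [Multiset.mem_map, Set.Finite.mem_toFinset]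

lemma blockMs_insert {m : {x // x ∈ W2} × Bool} {B : Set ({x // x ∈ W2} × Bool)}
    (h : m ∉ B) :
    blockMs W2 α (insert m B) = toLabel W2 α m ::ₘ blockMs W2 α B := by
  unfold blockMs
  have h1 : (Set.toFinite (insert m B)).toFinset = insert m (Set.toFinite B).toFinset := by
    ext a
    simp [Set.Finite.mem_toFinset]
  rw [h1, Finset.insert_val, Multiset.ndinsert_of_notMem (by simp [Set.Finite.mem_toFinset, h]),
    Multiset.map_cons]

lemma letters_of_coe_eq_blockMs {p : List (Label α V)} {B : Set ({x // x ∈ W2} × Bool)}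
    (h : (p : Multiset (Label α V)) = blockMs W2 α B) : letters p = [] := by
  rw [letters, List.filterMap_eq_nil_iff]
  intro l hl
  have : l ∈ blockMs W2 α B := by rw [← h]; exact hl
  obtain ⟨m, _, rfl⟩ := (mem_blockMs W2).mp this
  rcases m with ⟨y, b⟩
  cases b <;> rfl

variable (A2 : VA α V Q2)

/-- state of the determinized closure automaton -/
abbrev DState : Type := Option (Set Q2 × Set ({x // x ∈ W2} × Bool))

def Dstep : DState W2 (Q2 := Q2) → Label α V → DState W2 (Q2 := Q2)
  | none, _ => none
  | some (S, B), Label.letter a =>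
      some ({q' | ∃ q ∈ S, ∃ p : List (Label α V),
        (p : Multiset (Label α V)) = blockMs W2 α B ∧ A2.Path q (p ++ [Label.letter a]) q'}, ∅)
  | some (S, B), Label.vopen x =>
      if h : x ∈ W2 then some (S, insert (⟨x, h⟩, true) B) else none
  | some (S, B), Label.vclose x =>
      if h : x ∈ W2 then some (S, insert (⟨x, h⟩, false) B) else none

def Drun (s : DState W2 (Q2 := Q2)) (w : List (Label α V)) : DState W2 (Q2 := Q2) :=
  w.foldl (Dstep W2 A2) s

def Dacc : DState W2 (Q2 := Q2) → Prop
  | none => False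
  | some (S, B) => ∃ q ∈ S, ∃ qf ∈ A2.final, ∃ p : List (Label α V),
      (p : Multiset (Label α V)) = blockMs W2 α B ∧ A2.Path q p qf

@[simp] lemma Drun_nil (s : DState W2 (Q2 := Q2)) : Drun W2 A2 s [] = s := rfl
@[simp] lemma Drun_cons (s : DState W2 (Q2 := Q2)) (l : Label α V) (w : List (Label α V)) :
    Drun W2 A2 s (l :: w) = Drun W2 A2 (Dstep W2 A2 s l) w := rfl

@[simp] lemma Dstep_none (l : Label α V) : Dstep W2 A2 none l = none := rfl

@[simp] lemma Drun_none (w : List (Label α V)) : Drun W2 A2 none w = none := by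
  induction w with
  | nil => rfl
  | cons l w ih => rw [Drun_cons, Dstep_none, ih]

end D

section Inv
variable {α V Q2 : Type} [DecidableEq α] [DecidableEq V] (W2 : Finset V) (A2 : VA α V Q2)

lemma Dstep_letter (S : Set Q2) (B : Set ({x // x ∈ W2} × Bool)) (a : α) :
    Dstep W2 A2 (some (S, B)) (Label.letter a) =
      some ({q' | ∃ q ∈ S, ∃ p : List (Label α V),
        (p : Multiset (Label α V)) = blockMs W2 α B ∧ A2.Path q (p ++ [Label.letter a]) q'}, ∅) := rfl

lemma Dstep_vopen (S : Set Q2) (B : Set ({x // x ∈ W2} × Bool)) (x : V) :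
    Dstep W2 A2 (some (S, B)) (Label.vopen x) =
      if h : x ∈ W2 then some (S, insert (⟨x, h⟩, true) B) else none := rfl

lemma Dstep_vclose (S : Set Q2) (B : Set ({x // x ∈ W2} × Bool)) (x : V) :
    Dstep W2 A2 (some (S, B)) (Label.vclose x) =
      if h : x ∈ W2 then some (S, insert (⟨x, h⟩, false) B) else none := rfl

lemma Dacc_none_iff : Dacc W2 A2 none ↔ False := Iff.rfl

lemma inv_correct (hseq2 : A2.Sequential)
    (hcov : ∀ w (x : V), A2.AcceptsRef w → Label.vopen x ∈ w → x ∈ W2)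
    (w : List (Label α V)) :
    ∀ S : Set Q2, ∀ B : Set ({x // x ∈ W2} × Bool),
      (mks w + blockMs W2 α B).Nodup →
      (∀ q ∈ S, ∃ u, A2.Path A2.init u q) →
      (Dacc W2 A2 (Drun W2 A2 (some (S, B)) w) ↔
        ∃ q ∈ S, ∃ qf ∈ A2.final, ∃ v, A2.Path q v qf ∧ letters v = letters w ∧
          dec v = (blockMs W2 α B + (dec w).1, (dec w).2)) := by
  induction w with
  | nil =>
    intro S B hnd hreach
    rw [Drun_nil]
    constructor
    · rintro ⟨q, hq, qf, hqf, p, hp, path⟩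
      refine ⟨q, hq, qf, hqf, p, path, letters_of_coe_eq_blockMs W2 hp, ?_⟩
      rw [dec_of_letters_nil (letters_of_coe_eq_blockMs W2 hp), hp]
      simp [dec]
    · rintro ⟨q, hq, qf, hqf, v, path, hlv, hdv⟩
      refine ⟨q, hq, qf, hqf, v, ?_, path⟩
      rw [dec_of_letters_nil hlv] at hdv
      have h1 := congrArg Prod.fst hdv
      simpa [dec] using h1
  | cons l w ih =>
    intro S B hnd hreach
    cases l with
    | letter a =>
      rw [Drun_cons, Dstep_letter]
      have hnd' : (mks w + blockMs W2 α (∅ : Set ({x // x ∈ W2} × Bool))).Nodup := by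
        rw [blockMs_empty, add_zero]
        have hnd2 : (mks w + blockMs W2 α B).Nodup := by rwa [mks_letter] at hnd
        exact Multiset.nodup_of_le (Multiset.le_add_right _ _) hnd2
      have hreach' : ∀ q' ∈ {q' | ∃ q ∈ S, ∃ p : List (Label α V),
          (p : Multiset (Label α V)) = blockMs W2 α B ∧ A2.Path q (p ++ [Label.letter a]) q'},
          ∃ u, A2.Path A2.init u q' := by
        rintro q' ⟨q, hq, p, hp, path⟩
        obtain ⟨u, pu⟩ := hreach q hq
        exact ⟨u ++ (p ++ [Label.letter a]), path_trans pu path⟩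
      rw [ih _ _ hnd' hreach']
      constructor
      · rintro ⟨q1, ⟨q, hq, p, hp, pq1⟩, qf, hqf, v', pv', hl', hd'⟩
        refine ⟨q, hq, qf, hqf, p ++ Label.letter a :: v', ?_, ?_, ?_⟩
        · have hre : p ++ Label.letter a :: v' = (p ++ [Label.letter a]) ++ v' := by simp
          rw [hre]
          exact path_trans pq1 pv'
        · rw [letters_append, letters_of_coe_eq_blockMs W2 hp, letters_cons_letter,
            letters_cons_letter, hl']
          rfl
        · rw [dec_append_of_letters_nil (letters_of_coe_eq_blockMs W2 hp), hp]
          have hd'' : dec v' = dec w := by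
            rw [hd', blockMs_empty, zero_add]
          simp only [dec, hd'']
      · rintro ⟨q, hq, qf, hqf, v, pv, hlv, hdv⟩
        rw [letters_cons_letter] at hlv
        obtain ⟨p, v', rfl, hp0, hlv'⟩ := exists_split hlv
        rw [dec_append_of_letters_nil hp0] at hdv
        simp only [dec] at hdv
        have h1 : (p : Multiset (Label α V)) = blockMs W2 α B := by
          have h2 := congrArg Prod.fst hdv
          simpa using h2
        have h2 : dec v' = dec w := by
          have h3 := congrArg Prod.snd hdv
          simp only [List.cons.injEq] at h3
          exact Prod.ext_iff.mpr ⟨h3.1, h3.2⟩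
        have pv' : A2.Path q ((p ++ [Label.letter a]) ++ v') qf := by
          simpa using pv
        obtain ⟨q1, pq1, pv2⟩ := path_append_split pv'
        refine ⟨q1, ⟨q, hq, p, h1, pq1⟩, qf, hqf, v', pv2, hlv', ?_⟩
        rw [h2, blockMs_empty, zero_add]
    | vopen x =>
      rw [Drun_cons, Dstep_vopen]
      by_cases h : x ∈ W2
      · rw [dif_pos h]
        have hmB : ((⟨x, h⟩, true) : {x // x ∈ W2} × Bool) ∉ B := by
          intro hmem
          have hb1 : Label.vopen x ∈ blockMs W2 α B :=
            (mem_blockMs W2).mpr ⟨(⟨x, h⟩, true), hmem, rfl⟩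
          have hb2 := Multiset.nodup_iff_count_le_one.mp hnd (Label.vopen x)
          rw [Multiset.count_add, mks_vopen, Multiset.count_cons_self] at hb2
          have hb3 : 0 < Multiset.count (Label.vopen x) (blockMs W2 α B) :=
            Multiset.count_pos.mpr hb1
          omega
        have hins : blockMs W2 α (insert ((⟨x, h⟩, true) : {x // x ∈ W2} × Bool) B) =
            Label.vopen x ::ₘ blockMs W2 α B := by
          rw [blockMs_insert W2 hmB]; rfl
        have hnd' : (mks w + blockMs W2 α (insert ((⟨x, h⟩, true) : {x // x ∈ W2} × Bool) B)).Nodup := by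
          rw [hins]
          have heq : mks w + (Label.vopen x ::ₘ blockMs W2 α B) =
              mks (Label.vopen x :: w) + blockMs W2 α B := by
            rw [Multiset.add_cons, mks_vopen, Multiset.cons_add]
          rw [heq]
          exact hnd
        have hrw : (blockMs W2 α B + (dec (Label.vopen x :: w)).1, (dec (Label.vopen x :: w)).2) =
            (blockMs W2 α (insert ((⟨x, h⟩, true) : {x // x ∈ W2} × Bool) B) + (dec w).1, (dec w).2) := by
          simp only [dec, hins]
          rw [Multiset.add_cons, Multiset.cons_add]
        rw [hrw, letters_cons_vopen]
        exact ih _ _ hnd' hreach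
      · rw [dif_neg h, Drun_none, Dacc_none_iff]
        constructor
        · exact False.elim
        · rintro ⟨q, hq, qf, hqf, v, pv, hlv, hdv⟩
          have hvx : Label.vopen x ∈ v := by
            apply mem_of_mem_blocks (w := v) (i := 0)
            show Label.vopen x ∈ (dec v).1
            have h1 := congrArg Prod.fst hdv
            rw [h1]
            simp only [dec]
            rw [Multiset.add_cons]
            exact Multiset.mem_cons_self _ _
          obtain ⟨u, pu⟩ := hreach q hq
          have hacc : A2.AcceptsRef (u ++ v) := ⟨qf, hqf, path_trans pu pv⟩
          exact h (hcov _ x hacc (List.mem_append_right u hvx))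
    | vclose x =>
      rw [Drun_cons, Dstep_vclose]
      by_cases h : x ∈ W2
      · rw [dif_pos h]
        have hmB : ((⟨x, h⟩, false) : {x // x ∈ W2} × Bool) ∉ B := by
          intro hmem
          have hb1 : Label.vclose x ∈ blockMs W2 α B :=
            (mem_blockMs W2).mpr ⟨(⟨x, h⟩, false), hmem, rfl⟩
          have hb2 := Multiset.nodup_iff_count_le_one.mp hnd (Label.vclose x)
          rw [Multiset.count_add, mks_vclose, Multiset.count_cons_self] at hb2
          have hb3 : 0 < Multiset.count (Label.vclose x) (blockMs W2 α B) :=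
            Multiset.count_pos.mpr hb1
          omega
        have hins : blockMs W2 α (insert ((⟨x, h⟩, false) : {x // x ∈ W2} × Bool) B) =
            Label.vclose x ::ₘ blockMs W2 α B := by
          rw [blockMs_insert W2 hmB]; rfl
        have hnd' : (mks w + blockMs W2 α (insert ((⟨x, h⟩, false) : {x // x ∈ W2} × Bool) B)).Nodup := by
          rw [hins]
          have heq : mks w + (Label.vclose x ::ₘ blockMs W2 α B) =
              mks (Label.vclose x :: w) + blockMs W2 α B := by
            rw [Multiset.add_cons, mks_vclose, Multiset.cons_add]
          rw [heq]
          exact hnd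
        have hrw : (blockMs W2 α B + (dec (Label.vclose x :: w)).1, (dec (Label.vclose x :: w)).2) =
            (blockMs W2 α (insert ((⟨x, h⟩, false) : {x // x ∈ W2} × Bool) B) + (dec w).1, (dec w).2) := by
          simp only [dec, hins]
          rw [Multiset.add_cons, Multiset.cons_add]
        rw [hrw, letters_cons_vclose]
        exact ih _ _ hnd' hreach
      · rw [dif_neg h, Drun_none, Dacc_none_iff]
        constructor
        · exact False.elim
        · rintro ⟨q, hq, qf, hqf, v, pv, hlv, hdv⟩
          have hvx : Label.vclose x ∈ v := by
            apply mem_of_mem_blocks (w := v) (i := 0)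
            show Label.vclose x ∈ (dec v).1
            have h1 := congrArg Prod.fst hdv
            rw [h1]
            simp only [dec]
            rw [Multiset.add_cons]
            exact Multiset.mem_cons_self _ _
          obtain ⟨u, pu⟩ := hreach q hq
          have hacc : A2.AcceptsRef (u ++ v) := ⟨qf, hqf, path_trans pu pv⟩
          have hval := hseq2 _ hacc
          rcases hval x with ⟨_, h2⟩ | ⟨h1, _, _⟩
          · exact h2 (List.mem_append_right u hvx)
          · exact h (hcov _ x hacc (mem_of_count_one h1))

end Inv

section Main
variable {α V Q1 Q2 : Type} [DecidableEq α] [DecidableEq V] (W2 : Finset V) (A2 : VA α V Q2)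

lemma valid_mks_nodup {w : List (Label α V)} (hw : ValidRef w) : (mks w).Nodup := by
  rw [Multiset.nodup_iff_count_le_one]
  intro l
  have h1 : Multiset.count l (mks w) =
      List.count l (w.filter fun l => match l with | Label.letter _ => false | _ => true) :=
    Multiset.coe_count _ _
  rw [h1]
  have hsub : (w.filter fun l => match l with | Label.letter _ => false | _ => true).Sublist w :=
    List.filter_sublist
  have h2 := hsub.count_le l
  cases l with
  | letter a =>
    have h3 : Label.letter a ∉ (w.filter fun l => match l with | Label.letter _ => false | _ => true) := by
      intro hm
      have := List.of_mem_filter hm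
      simp at this
    rw [List.count_eq_zero.mpr h3]
    omega
  | vopen x =>
    rcases hw x with ⟨hn, _⟩ | ⟨hc, _, _⟩
    · rw [List.count_eq_zero.mpr hn] at h2; omega
    · omega
  | vclose x =>
    rcases hw x with ⟨_, hn⟩ | ⟨_, hc, _⟩
    · rw [List.count_eq_zero.mpr hn] at h2; omega
    · omega

lemma drun_correct (hseq2 : A2.Sequential)
    (hcov : ∀ w (x : V), A2.AcceptsRef w → Label.vopen x ∈ w → x ∈ W2)
    {w : List (Label α V)} (hw : ValidRef w) :
    Dacc W2 A2 (Drun W2 A2 (some ({A2.init}, ∅)) w) ↔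
      ∃ v, A2.AcceptsRef v ∧ letters v = letters w ∧ dec v = dec w := by
  rw [inv_correct W2 A2 hseq2 hcov w {A2.init} ∅
    (by rw [blockMs_empty, add_zero]; exact valid_mks_nodup hw)
    (by
      intro q hq
      rw [Set.mem_singleton_iff] at hq
      subst hq
      exact ⟨[], VA.Path.nil _⟩)]
  constructor
  · rintro ⟨q, hq, qf, hqf, v, pv, hl, hd⟩
    rw [Set.mem_singleton_iff] at hq
    subst hq
    refine ⟨v, ⟨qf, hqf, pv⟩, hl, ?_⟩
    rw [blockMs_empty, zero_add] at hd
    exact hd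
  · rintro ⟨v, ⟨qf, hqf, pv⟩, hl, hd⟩
    refine ⟨A2.init, rfl, qf, hqf, v, pv, hl, ?_⟩
    rw [blockMs_empty, zero_add, hd]

variable (A1 : VA α V Q1)

def prodVA : VA α V (Q1 × DState W2 (Q2 := Q2)) where
  init := (A1.init, some ({A2.init}, ∅))
  final := {p | p.1 ∈ A1.final ∧ ¬ Dacc W2 A2 p.2}
  trans := fun p l p' => A1.trans p.1 l p'.1 ∧ p'.2 = Dstep W2 A2 p.2 l

lemma prod_path_mk {q q' : Q1} {w : List (Label α V)} (h : A1.Path q w q') :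
    ∀ s, (prodVA W2 A2 A1).Path (q, s) w (q', Drun W2 A2 s w) := by
  induction h with
  | nil => intro s; exact VA.Path.nil _
  | cons t pth ih => intro s; exact VA.Path.cons ⟨t, rfl⟩ (ih _)

lemma prod_path_iff {p p' : Q1 × DState W2 (Q2 := Q2)} {w : List (Label α V)} :
    (prodVA W2 A2 A1).Path p w p' ↔ (A1.Path p.1 w p'.1 ∧ p'.2 = Drun W2 A2 p.2 w) := by
  constructor
  · intro h
    induction h with
    | nil => exact ⟨VA.Path.nil _, rfl⟩
    | cons t pth ih =>
      refine ⟨VA.Path.cons t.1 ih.1, ?_⟩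
      rw [Drun_cons, ← t.2]
      exact ih.2
  · rintro ⟨h1, h2⟩
    have h3 := prod_path_mk W2 A2 A1 h1 p.2
    rw [← h2] at h3
    exact h3

lemma prod_accepts_iff {w : List (Label α V)} :
    (prodVA W2 A2 A1).AcceptsRef w ↔
      (A1.AcceptsRef w ∧ ¬ Dacc W2 A2 (Drun W2 A2 (some ({A2.init}, ∅)) w)) := by
  constructor
  · rintro ⟨pf, ⟨hf1, hf2⟩, hpath⟩
    rw [prod_path_iff] at hpath
    refine ⟨⟨pf.1, hf1, hpath.1⟩, ?_⟩
    rw [hpath.2] at hf2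
    exact hf2
  · rintro ⟨⟨qf, hqf, hpath⟩, hnd⟩
    refine ⟨(qf, Drun W2 A2 (some ({A2.init}, ∅)) w), ⟨hqf, hnd⟩, ?_⟩
    rw [prod_path_iff]
    exact ⟨hpath, rfl⟩

end Main

theorem main_diff {α V Q1 Q2 : Type} [DecidableEq α] [DecidableEq V] [Fintype Q1] [Fintype Q2]
    (A1 : VA α V Q1) (A2 : VA α V Q2) (h1 : A1.Sequential) (h2 : A2.Sequential) :
    IsRegular (fun d => A1.spanner d \ A2.spanner d) := by
  have hOV := openVars_finite A2 h2
  set W2 := hOV.toFinset with hW2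
  have hcov : ∀ w (x : V), A2.AcceptsRef w → Label.vopen x ∈ w → x ∈ W2 := by
    intro w x hacc hx
    rw [hW2, Set.Finite.mem_toFinset]
    exact ⟨w, hacc, hx⟩
  refine ⟨Q1 × DState W2 (Q2 := Q2), Fintype.ofFinite _, prodVA W2 A2 A1, ?_, ?_⟩
  · intro w hacc
    exact h1 w ((prod_accepts_iff W2 A2 A1).mp hacc).1
  · funext d
    ext m
    simp only [VA.spanner, Set.mem_setOf_eq, Set.mem_diff]
    constructor
    · rintro ⟨w, hacc, hlw, hm⟩
      rw [prod_accepts_iff] at hacc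
      refine ⟨⟨w, hacc.1, hlw, hm⟩, ?_⟩
      rintro ⟨v, hacc2, hlv, hm2⟩
      apply hacc.2
      rw [drun_correct W2 A2 h2 hcov (h1 w hacc.1)]
      exact ⟨v, hacc2, by rw [hlv, hlw],
        dec_eq_of_map (h2 v hacc2) (h1 w hacc.1) (by rw [hlv, hlw]) (by rw [hm2, hm])⟩
    · rintro ⟨⟨w, hacc1, hlw, hm⟩, hnot⟩
      refine ⟨w, ?_, hlw, hm⟩
      rw [prod_accepts_iff]
      refine ⟨hacc1, ?_⟩
      intro hd
      rw [drun_correct W2 A2 h2 hcov (h1 w hacc1)] at hd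
      obtain ⟨v, hacc2, hlv, hdv⟩ := hd
      exact hnot ⟨v, hacc2, by rw [hlv, hlw],
        by rw [map_eq_of_dec (h2 v hacc2) (h1 w hacc1) hdv, hm]⟩


/-- Regular spanners are closed under set difference. -/
theorem regular_closed_under_difference {α V : Type} [Fintype α] [DecidableEq α]
    [DecidableEq V] (P1 P2 : Spanner α V) (h1 : IsRegular P1) (h2 : IsRegular P2) :
    IsRegular (fun d => P1 d \ P2 d) := by
  obtain ⟨Q1, f1, A1, hs1, hp1⟩ := h1
  obtain ⟨Q2, f2, A2, hs2, hp2⟩ := h2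
  haveI := f1
  haveI := f2
  subst hp1
  subst hp2
  exact main_diff A1 A2 hs1 hs2

end DocSpanners
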